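/- arXiv:2512.08034 — 2 statements merged into one kernel-verified Lean document; each statement's English description precedes it below -/
import Mathlib

section
/- Gaussian reproduction lemma (multivariate): for positive definite covariance matrices C1 (n×n) and C2 (m×m), a matrix A ∈ ℝ^{m×n}, and vectors μ1 ∈ ℝ^n, μ2 ∈ ℝ^m, the pointwise product of Gaussian densities satisfies N(x|μ1,C1)·N(Ax|μ2,C2) = N(μ2|Aμ1, A C1 Aᵀ + C2)·N(x|μ3,C3) for all x ∈ ℝ^n, where C3 = (C1^{-1} + Aᵀ C2^{-1} A)^{-1} and μ3 = C3(C1^{-1}μ1 + Aᵀ C2^{-1} μ2). -/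
open Matrix Real

private lemma bilin_symm {d : ℕ} (S : Matrix (Fin d) (Fin d) ℝ) (hS : Sᵀ = S)
    (v w : Fin d → ℝ) : v ⬝ᵥ S *ᵥ w = w ⬝ᵥ S *ᵥ v := by
  rw [Matrix.dotProduct_mulVec, ← Matrix.mulVec_transpose, hS, dotProduct_comm]

private lemma dotT {n m : ℕ} (A : Matrix (Fin m) (Fin n) ℝ) (u : Fin n → ℝ) (w : Fin m → ℝ) :
    u ⬝ᵥ Aᵀ *ᵥ w = (A *ᵥ u) ⬝ᵥ w := by
  rw [Matrix.dotProduct_mulVec, Matrix.vecMul_transpose]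

/-- The multivariate Gaussian density `N(x | μ, C)`. -/
noncomputable def gaussPDF {d : ℕ} (μ : Fin d → ℝ) (C : Matrix (Fin d) (Fin d) ℝ)
    (x : Fin d → ℝ) : ℝ :=
  (2 * π) ^ (-(d : ℝ) / 2) * C.det ^ (-(1 : ℝ) / 2) *
    Real.exp (-((x - μ) ⬝ᵥ (C⁻¹ *ᵥ (x - μ))) / 2)

theorem gaussian_reproduction_lemma {n m : ℕ}
    (C1 : Matrix (Fin n) (Fin n) ℝ) (C2 : Matrix (Fin m) (Fin m) ℝ)
    (A : Matrix (Fin m) (Fin n) ℝ) (μ1 : Fin n → ℝ) (μ2 : Fin m → ℝ)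
    (hC1 : C1.PosDef) (hC2 : C2.PosDef)
    (C3 : Matrix (Fin n) (Fin n) ℝ) (μ3 : Fin n → ℝ)
    (hC3 : C3 = (C1⁻¹ + Aᵀ * C2⁻¹ * A)⁻¹)
    (hμ3 : μ3 = C3 *ᵥ (C1⁻¹ *ᵥ μ1 + Aᵀ *ᵥ (C2⁻¹ *ᵥ μ2))) :
    ∀ x : Fin n → ℝ,
      gaussPDF μ1 C1 x * gaussPDF μ2 C2 (A *ᵥ x) =
        gaussPDF (A *ᵥ μ1) (A * C1 * Aᵀ + C2) μ2 * gaussPDF μ3 C3 x := by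
  intro x
  have hS1 : (C1⁻¹)ᵀ = C1⁻¹ := hC1.inv.1
  have hS2 : (C2⁻¹)ᵀ = C2⁻¹ := hC2.inv.1
  have hC1u : IsUnit C1.det := isUnit_iff_ne_zero.mpr hC1.det_pos.ne'
  have hC2u : IsUnit C2.det := isUnit_iff_ne_zero.mpr hC2.det_pos.ne'
  -- positive definiteness of M and K
  have hMpd : (A * C1 * Aᵀ + C2).PosDef := by
    rw [add_comm]
    exact hC2.add_posSemidef (by simpa using hC1.posSemidef.mul_mul_conjTranspose_same A)
  have hKpd : (C1⁻¹ + Aᵀ * C2⁻¹ * A).PosDef :=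
    hC1.inv.add_posSemidef (by simpa using hC2.inv.posSemidef.mul_mul_conjTranspose_same Aᵀ)
  have hMu : IsUnit (A * C1 * Aᵀ + C2).det := isUnit_iff_ne_zero.mpr hMpd.det_pos.ne'
  have hKu : IsUnit (C1⁻¹ + Aᵀ * C2⁻¹ * A).det := isUnit_iff_ne_zero.mpr hKpd.det_pos.ne'
  have hC3pd : C3.PosDef := hC3 ▸ hKpd.inv
  have hC3inv : C3⁻¹ = C1⁻¹ + Aᵀ * C2⁻¹ * A := by
    rw [hC3, Matrix.nonsing_inv_nonsing_inv _ hKu]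
  -- key vector relation
  have hKμ3 : (C1⁻¹ + Aᵀ * C2⁻¹ * A) *ᵥ μ3 = C1⁻¹ *ᵥ μ1 + Aᵀ *ᵥ (C2⁻¹ *ᵥ μ2) := by
    rw [hμ3, hC3, Matrix.mulVec_mulVec, Matrix.mul_nonsing_inv _ hKu, Matrix.one_mulVec]
  -- scalar version, for any test vector v
  have key : ∀ v : Fin n → ℝ,
      v ⬝ᵥ C1⁻¹ *ᵥ μ3 + (A *ᵥ v) ⬝ᵥ C2⁻¹ *ᵥ (A *ᵥ μ3)
        = v ⬝ᵥ C1⁻¹ *ᵥ μ1 + (A *ᵥ v) ⬝ᵥ C2⁻¹ *ᵥ μ2 := by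
    intro v
    have h := congrArg (fun w => v ⬝ᵥ w) hKμ3
    simpa [Matrix.add_mulVec, ← Matrix.mulVec_mulVec, dotT, dotProduct_add] using h
  -- relation for M⁻¹ applied to μ2 - A μ1
  have hA1 : Aᵀ *ᵥ (C2⁻¹ *ᵥ (μ2 - A *ᵥ μ3)) = C1⁻¹ *ᵥ μ3 - C1⁻¹ *ᵥ μ1 := by
    have h := hKμ3
    simp only [Matrix.add_mulVec, ← Matrix.mulVec_mulVec] at h
    rw [Matrix.mulVec_sub, Matrix.mulVec_sub]
    linear_combination -h
  have hMw : (A * C1 * Aᵀ + C2) *ᵥ (C2⁻¹ *ᵥ (μ2 - A *ᵥ μ3)) = μ2 - A *ᵥ μ1 := by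
    rw [Matrix.add_mulVec]
    have h2 : C2 *ᵥ (C2⁻¹ *ᵥ (μ2 - A *ᵥ μ3)) = μ2 - A *ᵥ μ3 := by
      rw [Matrix.mulVec_mulVec, Matrix.mul_nonsing_inv _ hC2u, Matrix.one_mulVec]
    have h1 : (A * C1 * Aᵀ) *ᵥ (C2⁻¹ *ᵥ (μ2 - A *ᵥ μ3)) = A *ᵥ μ3 - A *ᵥ μ1 := by
      have : (A * C1 * Aᵀ) *ᵥ (C2⁻¹ *ᵥ (μ2 - A *ᵥ μ3))
          = A *ᵥ (C1 *ᵥ (Aᵀ *ᵥ (C2⁻¹ *ᵥ (μ2 - A *ᵥ μ3)))) := by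
        simp [← Matrix.mulVec_mulVec]
      rw [this, hA1]
      simp [Matrix.mulVec_sub, Matrix.mulVec_mulVec, Matrix.mul_nonsing_inv _ hC1u,
        Matrix.one_mulVec]
    rw [h1, h2]
    abel
  have hMinv : (A * C1 * Aᵀ + C2)⁻¹ *ᵥ (μ2 - A *ᵥ μ1) = C2⁻¹ *ᵥ (μ2 - A *ᵥ μ3) := by
    conv_lhs => rw [← hMw]
    rw [Matrix.mulVec_mulVec, Matrix.nonsing_inv_mul _ hMu, Matrix.one_mulVec]
  -- determinant identity
  have hdet : C1.det * C2.det = (A * C1 * Aᵀ + C2).det * C3.det := by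
    have hKfact : C1⁻¹ + Aᵀ * C2⁻¹ * A = C1⁻¹ * (1 + (C1 * Aᵀ * C2⁻¹) * A) := by
      rw [Matrix.mul_add, Matrix.mul_one]
      congr 1
      rw [show C1⁻¹ * (C1 * Aᵀ * C2⁻¹ * A) = (C1⁻¹ * C1) * (Aᵀ * C2⁻¹ * A) by
        simp only [Matrix.mul_assoc], Matrix.nonsing_inv_mul _ hC1u, Matrix.one_mul]
    have hMfact : (1 : Matrix (Fin m) (Fin m) ℝ) + A * (C1 * Aᵀ * C2⁻¹)
        = (A * C1 * Aᵀ + C2) * C2⁻¹ := by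
      rw [Matrix.add_mul, Matrix.mul_nonsing_inv _ hC2u]
      rw [add_comm]
      congr 1
      simp only [Matrix.mul_assoc]
    have hKdet : (C1⁻¹ + Aᵀ * C2⁻¹ * A).det
        = C1⁻¹.det * ((A * C1 * Aᵀ + C2).det * C2⁻¹.det) := by
      rw [hKfact, Matrix.det_mul, Matrix.det_one_add_mul_comm, hMfact, Matrix.det_mul]
    have hdC3 : C3.det = ((C1⁻¹ + Aᵀ * C2⁻¹ * A).det)⁻¹ := by
      rw [hC3, Matrix.det_nonsing_inv, Ring.inverse_eq_inv']
    have hdC1 : C1⁻¹.det = (C1.det)⁻¹ := by rw [Matrix.det_nonsing_inv, Ring.inverse_eq_inv']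
    have hdC2 : C2⁻¹.det = (C2.det)⁻¹ := by rw [Matrix.det_nonsing_inv, Ring.inverse_eq_inv']
    rw [hdC3, hKdet, hdC1, hdC2]
    field_simp [hMpd.det_pos.ne', hKpd.det_pos.ne']
  -- exponent identity
  have eqExp : (x - μ1) ⬝ᵥ C1⁻¹ *ᵥ (x - μ1) + (A *ᵥ x - μ2) ⬝ᵥ C2⁻¹ *ᵥ (A *ᵥ x - μ2)
      = (μ2 - A *ᵥ μ1) ⬝ᵥ (C2⁻¹ *ᵥ (μ2 - A *ᵥ μ3))
        + (x - μ3) ⬝ᵥ (C1⁻¹ + Aᵀ * C2⁻¹ * A) *ᵥ (x - μ3) := by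
    have s1 := bilin_symm _ hS1
    have s2 := bilin_symm _ hS2
    simp only [Matrix.add_mulVec, ← Matrix.mulVec_mulVec, Matrix.mulVec_sub,
      sub_dotProduct, dotProduct_sub, add_dotProduct,
      dotProduct_add, dotT]
    linarith [key x, key μ1, key μ3, s1 x μ1, s1 x μ3, s1 μ1 μ3,
      s2 (A *ᵥ x) μ2, s2 (A *ᵥ x) (A *ᵥ μ3), s2 μ2 (A *ᵥ μ3)]
  -- assembling
  unfold gaussPDF
  rw [hC3inv, hMinv]
  have hdetpow : C1.det ^ (-(1:ℝ)/2) * C2.det ^ (-(1:ℝ)/2)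
      = (A * C1 * Aᵀ + C2).det ^ (-(1:ℝ)/2) * C3.det ^ (-(1:ℝ)/2) := by
    rw [← Real.mul_rpow hC1.det_pos.le hC2.det_pos.le,
      ← Real.mul_rpow hMpd.det_pos.le hC3pd.det_pos.le, hdet]
  have hexp : Real.exp (-((x - μ1) ⬝ᵥ C1⁻¹ *ᵥ (x - μ1)) / 2)
        * Real.exp (-((A *ᵥ x - μ2) ⬝ᵥ C2⁻¹ *ᵥ (A *ᵥ x - μ2)) / 2)
      = Real.exp (-((μ2 - A *ᵥ μ1) ⬝ᵥ (C2⁻¹ *ᵥ (μ2 - A *ᵥ μ3))) / 2)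
        * Real.exp (-((x - μ3) ⬝ᵥ (C1⁻¹ + Aᵀ * C2⁻¹ * A) *ᵥ (x - μ3)) / 2) := by
    rw [← Real.exp_add, ← Real.exp_add]
    congr 1
    linarith [eqExp]
  linear_combination
    ((2 * π) ^ (-(n:ℝ)/2) * (2 * π) ^ (-(m:ℝ)/2) * (C1.det ^ (-(1:ℝ)/2) * C2.det ^ (-(1:ℝ)/2))) * hexp
    + ((2 * π) ^ (-(n:ℝ)/2) * (2 * π) ^ (-(m:ℝ)/2)
        * (Real.exp (-((μ2 - A *ᵥ μ1) ⬝ᵥ (C2⁻¹ *ᵥ (μ2 - A *ᵥ μ3))) / 2)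
          * Real.exp (-((x - μ3) ⬝ᵥ (C1⁻¹ + Aᵀ * C2⁻¹ * A) *ᵥ (x - μ3)) / 2))) * hdetpow
end

section
/- Equivalence of extrinsic variance formulas: with C_v symmetric positive definite m×m, A ∈ ℝ^{m×n} with columns a_1,…,a_n, diagonal positive definite C_p = Diag(τ_{p_1},…,τ_{p_n}), and C = (AᵀC_v^{-1}A + C_p^{-1})^{-1}, define τ̂_n = e_nᵀ C e_n. Then (1/τ̂_n − 1/τ_{p_n})^{-1} = [a_nᵀ (C_v + A_{\bar n} C_{p,\bar n} A_{\bar n}ᵀ)^{-1} a_n]^{-1}, where A_{\bar n} is A with column n removed and C_{p,\bar n} is C_p with row/column n removed, provided 1/τ̂_n − 1/τ_{p_n} ≠ 0. -/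
open Matrix

theorem extrinsic_variance_equivalence {m n : ℕ}
    (Cv : Matrix (Fin m) (Fin m) ℝ) (hCv : Cv.PosDef)
    (A : Matrix (Fin m) (Fin (n + 1)) ℝ)
    (τp : Fin (n + 1) → ℝ) (hτp : ∀ i, 0 < τp i)
    (C : Matrix (Fin (n + 1)) (Fin (n + 1)) ℝ)
    (hC : C = (Aᵀ * Cv⁻¹ * A + (Matrix.diagonal τp)⁻¹)⁻¹)
    (e : Fin (n + 1) → ℝ) (he : e = Pi.single (Fin.last n) 1)
    (τhat : ℝ) (hτhat : τhat = e ⬝ᵥ (C *ᵥ e))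
    (an : Fin m → ℝ) (han : an = fun i => A i (Fin.last n))
    (Abar : Matrix (Fin m) (Fin n) ℝ) (hAbar : Abar = A.submatrix id Fin.castSucc)
    (hne : 1 / τhat - 1 / τp (Fin.last n) ≠ 0) :
    (1 / τhat - 1 / τp (Fin.last n))⁻¹ =
      (an ⬝ᵥ ((Cv + Abar * Matrix.diagonal (fun i : Fin n => τp i.castSucc) * Abarᵀ)⁻¹ *ᵥ an))⁻¹ := by
  -- abbreviations
  set τ : ℝ := τp (Fin.last n) with hτ
  set Cp : Matrix (Fin (n+1)) (Fin (n+1)) ℝ := Matrix.diagonal τp with hCp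
  set D : Matrix (Fin n) (Fin n) ℝ := Matrix.diagonal (fun i : Fin n => τp i.castSucc) with hD
  set B : Matrix (Fin m) (Fin m) ℝ := Cv + Abar * D * Abarᵀ with hB
  set M : Matrix (Fin m) (Fin m) ℝ := Cv + A * Cp * Aᵀ with hM
  set P : Matrix (Fin (n+1)) (Fin (n+1)) ℝ := Aᵀ * Cv⁻¹ * A + Cp⁻¹ with hP
  set s : ℝ := an ⬝ᵥ (B⁻¹ *ᵥ an) with hs
  -- conjTranspose = transpose over ℝ
  have hctA : Aᴴ = Aᵀ := by ext i j; simp [Matrix.conjTranspose_apply]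
  have hctAt : (Aᵀ)ᴴ = A := by ext i j; simp [Matrix.conjTranspose_apply]
  have hctAbar : Abarᴴ = Abarᵀ := by ext i j; simp [Matrix.conjTranspose_apply]
  -- positive definiteness
  have hCpdef : Cp.PosDef := Matrix.posDef_diagonal_iff.mpr hτp
  have hDdef : D.PosDef := Matrix.posDef_diagonal_iff.mpr fun i => hτp _
  have hBdef : B.PosDef := by
    have := hDdef.posSemidef.mul_mul_conjTranspose_same Abar
    rw [hctAbar] at this
    exact hCv.add_posSemidef this
  have hMdef : M.PosDef := by
    have := hCpdef.posSemidef.mul_mul_conjTranspose_same A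
    rw [hctA] at this
    exact hCv.add_posSemidef this
  have hPdef : P.PosDef := by
    have h1 := (hCv.inv).posSemidef.mul_mul_conjTranspose_same Aᵀ
    rw [hctAt] at h1
    exact Matrix.PosDef.posSemidef_add h1 hCpdef.inv
  -- inverse cancellation on vectors
  have invmul : ∀ (X : Matrix (Fin m) (Fin m) ℝ), X.PosDef → ∀ v, X⁻¹ *ᵥ (X *ᵥ v) = v := by
    intro X hX v
    rw [Matrix.mulVec_mulVec, Matrix.nonsing_inv_mul _ (Matrix.isUnit_iff_isUnit_det _ |>.mp hX.isUnit), Matrix.one_mulVec]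
  have invmul' : ∀ (X : Matrix (Fin (n+1)) (Fin (n+1)) ℝ), X.PosDef → ∀ v, X⁻¹ *ᵥ (X *ᵥ v) = v := by
    intro X hX v
    rw [Matrix.mulVec_mulVec, Matrix.nonsing_inv_mul _ (Matrix.isUnit_iff_isUnit_det _ |>.mp hX.isUnit), Matrix.one_mulVec]
  have mulinv : ∀ (X : Matrix (Fin m) (Fin m) ℝ), X.PosDef → ∀ v, X *ᵥ (X⁻¹ *ᵥ v) = v := by
    intro X hX v
    rw [Matrix.mulVec_mulVec, Matrix.mul_nonsing_inv _ (Matrix.isUnit_iff_isUnit_det _ |>.mp hX.isUnit), Matrix.one_mulVec]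
  -- s ≥ 0
  have hs0 : 0 ≤ s := by
    have := hBdef.inv.posSemidef.dotProduct_mulVec_nonneg an
    simpa [hs] using this
  have hτpos : 0 < τ := hτp _
  have hden : (0:ℝ) < 1 + τ * s := by positivity
  -- the rank-one splitting of M
  have hMsplit : M = B + Matrix.of (fun i j => τ * an i * an j) := by
    ext i j
    simp only [hM, hB, Matrix.add_apply, Matrix.of_apply]
    have : (A * Cp * Aᵀ) i j = ∑ k, A i k * τp k * A j k := by
      rw [Matrix.mul_apply]
      simp [Matrix.mul_diagonal, Matrix.transpose_apply, hCp]
    rw [this]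
    have : (Abar * D * Abarᵀ) i j = ∑ k : Fin n, A i k.castSucc * τp k.castSucc * A j k.castSucc := by
      rw [Matrix.mul_apply]
      simp [Matrix.mul_diagonal, Matrix.transpose_apply, hD, hAbar]
    rw [this, Fin.sum_univ_castSucc]
    simp [han, hτ]
    ring
  have hMv : ∀ v, M *ᵥ v = B *ᵥ v + (τ * (an ⬝ᵥ v)) • an := by
    intro v
    rw [hMsplit, Matrix.add_mulVec]
    congr 1
    ext i
    simp only [Matrix.mulVec, dotProduct, Matrix.of_apply, Pi.smul_apply, smul_eq_mul,
      Finset.mul_sum]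
    rw [Finset.sum_mul]
    exact Finset.sum_congr rfl fun j _ => by ring
  -- the solution of M x = an
  set x : Fin m → ℝ := (1 + τ * s)⁻¹ • (B⁻¹ *ᵥ an) with hx
  have hBx : B *ᵥ x = (1 + τ * s)⁻¹ • an := by
    rw [hx, Matrix.mulVec_smul, mulinv B hBdef]
  have hanx : an ⬝ᵥ x = (1 + τ * s)⁻¹ * s := by
    simp [hx, dotProduct_smul, hs, smul_eq_mul]
  have hMx : M *ᵥ x = an := by
    rw [hMv, hBx, hanx]
    ext i
    simp only [Pi.add_apply, Pi.smul_apply, smul_eq_mul]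
    field_simp
  have hMinv_an : M⁻¹ *ᵥ an = x := by rw [← hMx, invmul M hMdef]
  -- basic vector computations with e
  have hCpe : Cp *ᵥ e = τ • e := by
    ext i
    simp only [hCp, Matrix.mulVec_diagonal, Pi.smul_apply, smul_eq_mul, he]
    rcases eq_or_ne i (Fin.last n) with h | h
    · subst h; simp [hτ]
    · simp [Pi.single_apply, h]
  have hAe : A *ᵥ e = an := by
    ext i
    simp [he, Matrix.mulVec_single, han]
  have hdote : ∀ v : Fin (n+1) → ℝ, e ⬝ᵥ v = v (Fin.last n) := by
    intro v
    simp [he, dotProduct, Pi.single_apply]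
  have hAt : ∀ w : Fin m → ℝ, (Aᵀ *ᵥ w) (Fin.last n) = an ⬝ᵥ w := by
    intro w
    simp [Matrix.mulVec, dotProduct, han, mul_comm]
  -- w and y
  set w : Fin m → ℝ := τ • x with hw
  set y : Fin (n+1) → ℝ := Cp *ᵥ e - Cp *ᵥ (Aᵀ *ᵥ w) with hy
  have hACpe : A *ᵥ (Cp *ᵥ e) = τ • an := by rw [hCpe, Matrix.mulVec_smul, hAe]
  have hMw : M *ᵥ w = τ • an := by rw [hw, Matrix.mulVec_smul, hMx]
  have hAy : A *ᵥ y = Cv *ᵥ w := by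
    have h1 : A *ᵥ (Cp *ᵥ (Aᵀ *ᵥ w)) = (A * Cp * Aᵀ) *ᵥ w := by
      simp [Matrix.mulVec_mulVec, Matrix.mul_assoc]
    have h2 : (A * Cp * Aᵀ) *ᵥ w = M *ᵥ w - Cv *ᵥ w := by
      rw [hM, Matrix.add_mulVec]; abel
    rw [hy, Matrix.mulVec_sub, hACpe, h1, h2, hMw]
    abel
  have hPy : P *ᵥ y = e := by
    have hCpinv_y : Cp⁻¹ *ᵥ y = e - Aᵀ *ᵥ w := by
      rw [hy, Matrix.mulVec_sub, invmul' Cp hCpdef, invmul' Cp hCpdef]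
    have h1 : (Aᵀ * Cv⁻¹ * A) *ᵥ y = Aᵀ *ᵥ w := by
      have : (Aᵀ * Cv⁻¹ * A) *ᵥ y = Aᵀ *ᵥ (Cv⁻¹ *ᵥ (A *ᵥ y)) := by
        simp [Matrix.mulVec_mulVec, Matrix.mul_assoc]
      rw [this, hAy, invmul Cv hCv]
    rw [hP, Matrix.add_mulVec, h1, hCpinv_y]
    abel
  have hCe : C *ᵥ e = y := by
    rw [hC, ← hPy, invmul' P hPdef]
  -- compute τhat
  have hanw : an ⬝ᵥ w = τ * ((1 + τ * s)⁻¹ * s) := by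
    rw [hw, dotProduct_smul, hanx, smul_eq_mul]
  have hτhat' : τhat = τ - τ * (τ * ((1 + τ * s)⁻¹ * s)) := by
    rw [hτhat, hCe, hdote, hy]
    have h1 : (Cp *ᵥ e) (Fin.last n) = τ := by rw [hCpe]; simp [he]
    have h2 : (Cp *ᵥ (Aᵀ *ᵥ w)) (Fin.last n) = τp (Fin.last n) * (Aᵀ *ᵥ w) (Fin.last n) := by
      simp [hCp, Matrix.mulVec_diagonal]
    simp only [Pi.sub_apply, h1, h2, hAt, hanw, ← hτ]
  have hτhat2 : τhat = τ / (1 + τ * s) := by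
    rw [hτhat']
    field_simp
    ring
  have hτhatpos : 0 < τhat := by rw [hτhat2]; positivity
  have hkey : 1 / τhat - 1 / τ = s := by
    rw [hτhat2]
    field_simp
    ring
  rw [hkey]
end
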